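/- Fix $\epsilon > 0$. Let $T$ denote the number of triangles in the Erdős–Rényi random graph $G(n,p)$ and let $T'$ denote the number of triangles in $G(n,p)$ all three of whose edges are good. There exists a positive constant $C(\epsilon)$ depending only on $\epsilon$ such that $\mathbb{P}(T' \ge \mathbb{E}(T) + \epsilon n^3 p^3) \le e^{-C(\epsilon) n^2 p^2 \log(1/p)}$ (for all $n$ and $0 < p < 1$ with $np$ sufficiently large depending on $\epsilon$). -/

import Mathlib

open MeasureTheory ProbabilityTheory Real
open scoped Classical ENNReal NNReal

/-- The Erdős–Rényi random graph measure: each (non-diagonal) unordered pair of vertices of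
`Fin n` is an edge independently with probability `p`. The sample space records, for each
unordered pair, whether it is an edge. -/
noncomputable def erMeasure (n : ℕ) (p : ℝ≥0) (hp : p ≤ 1) :
    Measure (Sym2 (Fin n) → Bool) :=
  Measure.pi fun _ => (PMF.bernoulli p (by exact_mod_cast hp)).toMeasure

/-- Adjacency in the realization `ω`. -/
def Adj {n : ℕ} (ω : Sym2 (Fin n) → Bool) (u v : Fin n) : Prop :=
  u ≠ v ∧ ω s(u, v) = true

/-- The degree of a vertex. -/
noncomputable def deg {n : ℕ} (ω : Sym2 (Fin n) → Bool) (u : Fin n) : ℕ :=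
  (Finset.univ.filter (fun v => Adj ω u v)).card

/-- `t` is a triangle: a set of three pairwise adjacent vertices. -/
def IsTriangle {n : ℕ} (ω : Sym2 (Fin n) → Bool) (t : Finset (Fin n)) : Prop :=
  t.card = 3 ∧ ∀ u ∈ t, ∀ v ∈ t, u ≠ v → Adj ω u v

/-- The number of triangles. -/
noncomputable def triangleCount {n : ℕ} (ω : Sym2 (Fin n) → Bool) : ℕ :=
  (Finset.univ.filter (fun t : Finset (Fin n) => IsTriangle ω t)).card

/-- `e` is an edge of the graph. -/
def IsEdge {n : ℕ} (ω : Sym2 (Fin n) → Bool) (e : Sym2 (Fin n)) : Prop :=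
  ¬ e.IsDiag ∧ ω e = true

/-- The number of triangles containing both endpoints of `e`. -/
noncomputable def triOnEdge {n : ℕ} (ω : Sym2 (Fin n) → Bool) (e : Sym2 (Fin n)) : ℕ :=
  (Finset.univ.filter (fun t : Finset (Fin n) => IsTriangle ω t ∧ ∀ u ∈ e, u ∈ t)).card

/-- A good edge: an edge of the graph contained in fewer than `ε ℓ n p` triangles,
where `ℓ = 1 / log(1/p)`. -/
def GoodEdge {n : ℕ} (ε p : ℝ) (ω : Sym2 (Fin n) → Bool) (e : Sym2 (Fin n)) : Prop :=
  IsEdge ω e ∧ (triOnEdge ω e : ℝ) < ε * (1 / Real.log (1 / p)) * n * p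

/-- A bad edge: an edge of the graph that is not good. -/
def BadEdge {n : ℕ} (ε p : ℝ) (ω : Sym2 (Fin n) → Bool) (e : Sym2 (Fin n)) : Prop :=
  IsEdge ω e ∧ ¬ ((triOnEdge ω e : ℝ) < ε * (1 / Real.log (1 / p)) * n * p)

/-- A good vertex: one with fewer than `7np` neighbors. -/
def GoodVertex {n : ℕ} (p : ℝ) (ω : Sym2 (Fin n) → Bool) (u : Fin n) : Prop :=
  (deg ω u : ℝ) < 7 * n * p

/-- `T'`: the number of triangles all of whose edges are good. -/
noncomputable def triGoodEdges {n : ℕ} (ε p : ℝ) (ω : Sym2 (Fin n) → Bool) : ℕ :=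
  (Finset.univ.filter (fun t : Finset (Fin n) => IsTriangle ω t ∧
    ∀ u ∈ t, ∀ v ∈ t, u ≠ v → GoodEdge ε p ω s(u, v))).card

/-- `T₀`: the number of triangles with at least one bad edge but all good vertices. -/
noncomputable def triBadEdgeGoodVerts {n : ℕ} (ε p : ℝ) (ω : Sym2 (Fin n) → Bool) : ℕ :=
  (Finset.univ.filter (fun t : Finset (Fin n) => IsTriangle ω t ∧
    (∃ u ∈ t, ∃ v ∈ t, u ≠ v ∧ BadEdge ε p ω s(u, v)) ∧
    ∀ u ∈ t, GoodVertex p ω u)).card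

/-- The number of triangles with exactly `k` bad vertices. -/
noncomputable def triBadVerts {n : ℕ} (p : ℝ) (k : ℕ) (ω : Sym2 (Fin n) → Bool) : ℕ :=
  (Finset.univ.filter (fun t : Finset (Fin n) => IsTriangle ω t ∧
    (t.filter (fun u => ¬ GoodVertex p ω u)).card = k)).card

/-- `t_{uv}` for `e = {u,v}`: the number of common neighbors of `u` and `v` outside `{u,v}`. -/
noncomputable def commonNbrs {n : ℕ} (ω : Sym2 (Fin n) → Bool) (e : Sym2 (Fin n)) : ℕ :=
  (Finset.univ.filter (fun w => w ∉ e ∧ ∀ u ∈ e, Adj ω u w)).card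

/-- A matching: a collection of non-diagonal unordered pairs, no two of which share a vertex. -/
def IsMatching {n : ℕ} (A : Finset (Sym2 (Fin n))) : Prop :=
  (∀ e ∈ A, ¬ e.IsDiag) ∧ ∀ e ∈ A, ∀ f ∈ A, e ≠ f → ∀ v : Fin n, v ∈ e → v ∉ f


/-! ### Auxiliary lemmas -/

section Aux

instance er_isProb (n : ℕ) (p : ℝ≥0) (hp : p ≤ 1) :
    IsProbabilityMeasure (erMeasure n p hp) := by
  unfold erMeasure; infer_instance

lemma er_meas_all {n : ℕ} (s : Set (Sym2 (Fin n) → Bool)) : MeasurableSet s :=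
  s.toFinite.measurableSet

lemma er_cylinder {n : ℕ} (p : ℝ≥0) (hp : p ≤ 1) (E : Finset (Sym2 (Fin n))) :
    erMeasure n p hp {ω | ∀ e ∈ E, ω e = true} = (p : ℝ≥0∞) ^ E.card := by
  have hset : {ω : Sym2 (Fin n) → Bool | ∀ e ∈ E, ω e = true}
      = Set.univ.pi (fun e => if e ∈ E then ({true} : Set Bool) else Set.univ) := by
    ext ω
    simp only [Set.mem_setOf_eq, Set.mem_pi, Set.mem_univ, forall_true_left]
    constructor
    · intro h e
      by_cases he : e ∈ E <;> simp [he]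
      exact h e he
    · intro h e he
      have := h e
      simpa [he] using this
  rw [erMeasure, hset, Measure.pi_pi]
  have hsing : ∀ e : Sym2 (Fin n),
      ((PMF.bernoulli p (by exact_mod_cast hp)).toMeasure)
        (if e ∈ E then ({true} : Set Bool) else Set.univ)
      = if e ∈ E then (p : ℝ≥0∞) else 1 := by
    intro e
    by_cases he : e ∈ E
    · simp only [he, if_true]
      rw [PMF.toMeasure_apply_singleton _ _ (measurableSet_singleton _)]
      simp [PMF.bernoulli_apply]
    · simp only [he, if_false]
      simp
      exact add_tsub_cancel_of_le (PMF.coe_le_one _ _)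
  simp only [hsing]
  rw [Finset.prod_ite_mem]
  simp

noncomputable def edgesOf {n : ℕ} (t : Finset (Fin n)) : Finset (Sym2 (Fin n)) :=
  t.sym2.filter (fun e => ¬ e.IsDiag)

lemma mem_edgesOf {n : ℕ} {t : Finset (Fin n)} {a b : Fin n} :
    s(a, b) ∈ edgesOf t ↔ a ∈ t ∧ b ∈ t ∧ a ≠ b := by
  simp [edgesOf, Finset.mk_mem_sym2_iff, Sym2.mk_isDiag_iff, and_assoc]

lemma edgesOf_eq_of_card_three {n : ℕ} {t : Finset (Fin n)} {a b c : Fin n}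
    (hab : a ≠ b) (hac : a ≠ c) (hbc : b ≠ c) (ht : t = {a, b, c}) :
    edgesOf t = {s(a, b), s(a, c), s(b, c)} := by
  subst ht
  ext e
  induction e using Sym2.ind with
  | _ x y =>
    simp only [mem_edgesOf, Finset.mem_insert, Finset.mem_singleton, Sym2.eq, Sym2.rel_iff',
      Prod.mk.injEq, Prod.swap_prod_mk]
    constructor
    · rintro ⟨(rfl | rfl | rfl), (rfl | rfl | rfl), hxy⟩ <;> tauto
    · rintro (h | h | h) <;> rcases h with ⟨rfl, rfl⟩ | ⟨rfl, rfl⟩ <;> tauto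

lemma edgesOf_card_three {n : ℕ} {t : Finset (Fin n)} (ht : t.card = 3) :
    (edgesOf t).card = 3 := by
  obtain ⟨a, b, c, hab, hac, hbc, rfl⟩ := Finset.card_eq_three.mp ht
  rw [edgesOf_eq_of_card_three hab hac hbc rfl]
  rw [Finset.card_insert_of_notMem, Finset.card_insert_of_notMem, Finset.card_singleton]
  · simp only [Finset.mem_singleton, Sym2.eq, Sym2.rel_iff', Prod.mk.injEq, Prod.swap_prod_mk]
    tauto
  · simp only [Finset.mem_insert, Finset.mem_singleton, Sym2.eq, Sym2.rel_iff', Prod.mk.injEq,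
      Prod.swap_prod_mk]
    tauto

lemma isTriangle_iff_edges {n : ℕ} {ω : Sym2 (Fin n) → Bool} {t : Finset (Fin n)}
    (ht : t.card = 3) :
    IsTriangle ω t ↔ ∀ e ∈ edgesOf t, ω e = true := by
  constructor
  · rintro ⟨-, h⟩ e he
    induction e using Sym2.ind with
    | _ x y =>
      rw [mem_edgesOf] at he
      exact (h x he.1 y he.2.1 he.2.2).2
  · intro h
    refine ⟨ht, fun u hu v hv huv => ⟨huv, h _ (mem_edgesOf.mpr ⟨hu, hv, huv⟩)⟩⟩

lemma mem_of_mem_edgesOf {n : ℕ} {t : Finset (Fin n)} {e : Sym2 (Fin n)}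
    (he : e ∈ edgesOf t) : (¬ e.IsDiag) ∧ ∀ u ∈ e, u ∈ t := by
  induction e using Sym2.ind with
  | _ x y =>
    rw [mem_edgesOf] at he
    refine ⟨by simp [Sym2.mk_isDiag_iff, he.2.2], fun u hu => ?_⟩
    rcases Sym2.mem_iff.mp hu with rfl | rfl
    · exact he.1
    · exact he.2.1

lemma er_triangle_prob {n : ℕ} (p : ℝ≥0) (hp : p ≤ 1) {t : Finset (Fin n)}
    (ht : t.card = 3) :
    erMeasure n p hp {ω | IsTriangle ω t} = (p : ℝ≥0∞) ^ 3 := by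
  have : {ω : Sym2 (Fin n) → Bool | IsTriangle ω t}
      = {ω | ∀ e ∈ edgesOf t, ω e = true} := by
    ext ω; exact isTriangle_iff_edges ht
  rw [this, er_cylinder, edgesOf_card_three ht]


lemma triangleCount_eq_sum {n : ℕ} (ω : Sym2 (Fin n) → Bool) :
    (triangleCount ω : ℝ)
      = ∑ t ∈ Finset.powersetCard 3 (Finset.univ : Finset (Fin n)),
          (if IsTriangle ω t then (1 : ℝ) else 0) := by
  rw [triangleCount, Finset.card_filter]
  rw [Nat.cast_sum]
  rw [← Finset.sum_subset (Finset.subset_univ (Finset.powersetCard 3 Finset.univ))]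
  · rw [Finset.sum_congr rfl]
    intro t _
    split <;> simp
  · intro t _ ht
    rw [Finset.mem_powersetCard_univ] at ht
    have : ¬ IsTriangle ω t := fun h => ht h.1
    simp [this]

lemma er_expected_triangles {n : ℕ} (p : ℝ≥0) (hp : p ≤ 1) :
    (∫ ω, (triangleCount ω : ℝ) ∂(erMeasure n p hp)) = (n.choose 3 : ℝ) * (p : ℝ) ^ 3 := by
  have hrw : ∀ t : Finset (Fin n),
      (fun ω : Sym2 (Fin n) → Bool => if IsTriangle ω t then (1 : ℝ) else 0)
        = Set.indicator {ω | IsTriangle ω t} (fun _ => (1 : ℝ)) := by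
    intro t; ext ω
    by_cases h : IsTriangle ω t <;> simp [h, Set.indicator_of_mem, Set.mem_setOf_eq]
  calc ∫ ω, (triangleCount ω : ℝ) ∂(erMeasure n p hp)
      = ∫ ω, ∑ t ∈ Finset.powersetCard 3 (Finset.univ : Finset (Fin n)),
          (if IsTriangle ω t then (1 : ℝ) else 0) ∂(erMeasure n p hp) := by
        refine integral_congr_ae (Filter.Eventually.of_forall fun ω => ?_)
        exact triangleCount_eq_sum ω
    _ = ∑ t ∈ Finset.powersetCard 3 (Finset.univ : Finset (Fin n)),
          ∫ ω, (if IsTriangle ω t then (1 : ℝ) else 0) ∂(erMeasure n p hp) := by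
        refine integral_finset_sum _ fun t _ => ?_
        rw [hrw t]
        exact (integrable_const (1 : ℝ)).indicator (er_meas_all _)
    _ = ∑ t ∈ Finset.powersetCard 3 (Finset.univ : Finset (Fin n)), (p : ℝ) ^ 3 := by
        refine Finset.sum_congr rfl fun t ht => ?_
        rw [Finset.mem_powersetCard_univ] at ht
        rw [hrw t, integral_indicator_const _ (er_meas_all _), measureReal_def, er_triangle_prob p hp ht]
        simp [ENNReal.toReal_pow]
    _ = (n.choose 3 : ℝ) * (p : ℝ) ^ 3 := by
        rw [Finset.sum_const, Finset.card_powersetCard]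
        simp [mul_comm]


/-- The predicate of being a triangle all of whose edges are good. -/
def GoodTriP {n : ℕ} (ε p : ℝ) (ω : Sym2 (Fin n) → Bool) (t : Finset (Fin n)) : Prop :=
  IsTriangle ω t ∧ ∀ u ∈ t, ∀ v ∈ t, u ≠ v → GoodEdge ε p ω s(u, v)

lemma triGoodEdges_eq {n : ℕ} (ε p : ℝ) (ω : Sym2 (Fin n) → Bool) :
    triGoodEdges ε p ω = (Finset.univ.filter (fun t => GoodTriP ε p ω t)).card := by
  rw [triGoodEdges]
  congr 1
  apply Finset.filter_congr
  intro t _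
  rfl

lemma goodEdge_of_mem_edgesOf {n : ℕ} {ε p : ℝ} {ω : Sym2 (Fin n) → Bool}
    {t : Finset (Fin n)} {e : Sym2 (Fin n)} (ht : GoodTriP ε p ω t)
    (he : e ∈ edgesOf t) : GoodEdge ε p ω e := by
  induction e using Sym2.ind with
  | _ x y =>
    rw [mem_edgesOf] at he
    exact ht.2 x he.1 y he.2.1 he.2.2

/-- The set of good triangles containing a given edge has size at most `⌊ε ℓ n p⌋`. -/
lemma card_goodTri_on_edge_le {n : ℕ} (ε p : ℝ) (ω : Sym2 (Fin n) → Bool)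
    (e : Sym2 (Fin n)) :
    (Finset.univ.filter (fun t : Finset (Fin n) => GoodTriP ε p ω t ∧ e ∈ edgesOf t)).card
      ≤ ⌊ε * (1 / Real.log (1 / p)) * ↑n * p⌋₊ := by
  rcases Finset.eq_empty_or_nonempty
      (Finset.univ.filter (fun t : Finset (Fin n) => GoodTriP ε p ω t ∧ e ∈ edgesOf t)) with
    h | ⟨t₀, ht₀⟩
  · simp [h]
  · rw [Finset.mem_filter] at ht₀
    have hge : GoodEdge ε p ω e := goodEdge_of_mem_edgesOf ht₀.2.1 ht₀.2.2
    have hle : (Finset.univ.filter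
        (fun t : Finset (Fin n) => GoodTriP ε p ω t ∧ e ∈ edgesOf t)).card ≤ triOnEdge ω e := by
      apply Finset.card_le_card
      intro t ht
      rw [Finset.mem_filter] at ht ⊢
      exact ⟨Finset.mem_univ t, ht.2.1.1, (mem_of_mem_edgesOf ht.2.2).2⟩
    exact hle.trans (Nat.le_floor (le_of_lt hge.2))


/-- Floor of the good-edge triangle-count threshold. -/
noncomputable def Kfl (n : ℕ) (ε p : ℝ) : ℕ := ⌊ε * (1 / Real.log (1 / p)) * ↑n * p⌋₊

/-- Sequences of triangle candidates (3-sets) that are pairwise edge-disjoint. -/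
noncomputable def DisjSet (n r : ℕ) : Finset (Fin r → Finset (Fin n)) :=
  Finset.univ.filter (fun g => (∀ i, (g i).card = 3) ∧
    ∀ i j, i ≠ j → Disjoint (edgesOf (g i)) (edgesOf (g j)))

/-- The number of sequences of `r` pairwise edge-disjoint triangles. -/
noncomputable def Nseq {n : ℕ} (r : ℕ) (ω : Sym2 (Fin n) → Bool) : ℕ :=
  ((DisjSet n r).filter (fun g => ∀ i, IsTriangle ω (g i))).card

/-- Pairs of a sequence of `m` good triangles and a sequence of `s` good triangles that are
pairwise edge-disjoint and edge-disjoint from the first sequence. -/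
noncomputable def TPairs {n : ℕ} (ε p : ℝ) (ω : Sym2 (Fin n) → Bool) (m s : ℕ) :
    Finset ((Fin m → Finset (Fin n)) × (Fin s → Finset (Fin n))) :=
  Finset.univ.filter (fun q =>
    (∀ i, GoodTriP ε p ω (q.1 i)) ∧ (∀ l, GoodTriP ε p ω (q.2 l)) ∧
    (∀ l l', l ≠ l' → Disjoint (edgesOf (q.2 l)) (edgesOf (q.2 l'))) ∧
    (∀ i l, Disjoint (edgesOf (q.1 i)) (edgesOf (q.2 l))))

lemma TPairs_zero_card_le {n : ℕ} (ε p : ℝ) (ω : Sym2 (Fin n) → Bool) (s : ℕ) :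
    (TPairs ε p ω 0 s).card ≤ Nseq s ω := by
  rw [Nseq]
  apply Finset.card_le_card_of_injOn (fun q => q.2)
  · intro q hq
    rw [Finset.mem_coe, TPairs, Finset.mem_filter] at hq
    obtain ⟨-, -, h2, h3, -⟩ := hq
    rw [Finset.mem_coe, Finset.mem_filter, DisjSet, Finset.mem_filter]
    exact ⟨⟨Finset.mem_univ _, fun l => (h2 l).1.1, h3⟩, fun l => (h2 l).1⟩
  · intro q hq q' hq' h
    have h1 : q.1 = q'.1 := funext fun i => i.elim0
    exact Prod.ext h1 h

lemma card_nonfresh_le {n m : ℕ} (ε p : ℝ) (ω : Sym2 (Fin n) → Bool)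
    (f' : Fin m → Finset (Fin n)) (hf' : ∀ j, GoodTriP ε p ω (f' j)) :
    (Finset.univ.filter (fun t : Finset (Fin n) => GoodTriP ε p ω t ∧
        ¬ ∀ j, Disjoint (edgesOf (f' j)) (edgesOf t))).card ≤ 3 * m * Kfl n ε p := by
  have hsub : (Finset.univ.filter (fun t : Finset (Fin n) => GoodTriP ε p ω t ∧
        ¬ ∀ j, Disjoint (edgesOf (f' j)) (edgesOf t)))
      ⊆ Finset.univ.biUnion (fun j : Fin m => (edgesOf (f' j)).biUnion
          (fun e => Finset.univ.filter
            (fun t : Finset (Fin n) => GoodTriP ε p ω t ∧ e ∈ edgesOf t))) := by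
    intro t ht
    rw [Finset.mem_filter] at ht
    obtain ⟨-, hgt, hnd⟩ := ht
    push_neg at hnd
    obtain ⟨j, hj⟩ := hnd
    obtain ⟨e, he1, he2⟩ := Finset.not_disjoint_iff.mp hj
    exact Finset.mem_biUnion.mpr ⟨j, Finset.mem_univ _,
      Finset.mem_biUnion.mpr ⟨e, he1, Finset.mem_filter.mpr ⟨Finset.mem_univ _, hgt, he2⟩⟩⟩
  calc (Finset.univ.filter (fun t : Finset (Fin n) => GoodTriP ε p ω t ∧
        ¬ ∀ j, Disjoint (edgesOf (f' j)) (edgesOf t))).card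
      ≤ (Finset.univ.biUnion (fun j : Fin m => (edgesOf (f' j)).biUnion
          (fun e => Finset.univ.filter
            (fun t : Finset (Fin n) => GoodTriP ε p ω t ∧ e ∈ edgesOf t)))).card :=
        Finset.card_le_card hsub
    _ ≤ ∑ j : Fin m, ((edgesOf (f' j)).biUnion (fun e => Finset.univ.filter
            (fun t : Finset (Fin n) => GoodTriP ε p ω t ∧ e ∈ edgesOf t))).card :=
        Finset.card_biUnion_le
    _ ≤ ∑ j : Fin m, ∑ e ∈ edgesOf (f' j), (Finset.univ.filter
            (fun t : Finset (Fin n) => GoodTriP ε p ω t ∧ e ∈ edgesOf t)).card :=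
        Finset.sum_le_sum fun j _ => Finset.card_biUnion_le
    _ ≤ ∑ j : Fin m, ∑ _e ∈ edgesOf (f' j), Kfl n ε p :=
        Finset.sum_le_sum fun j _ => Finset.sum_le_sum fun e _ =>
          card_goodTri_on_edge_le ε p ω e
    _ = ∑ j : Fin m, (edgesOf (f' j)).card * Kfl n ε p := by
        simp [Finset.sum_const, mul_comm]
    _ = ∑ _j : Fin m, 3 * Kfl n ε p := by
        refine Finset.sum_congr rfl fun j _ => ?_
        rw [edgesOf_card_three (hf' j).1.1]
    _ = 3 * m * Kfl n ε p := by
        simp [Finset.sum_const, mul_comm, mul_assoc, mul_left_comm]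


lemma TPairs_step {n : ℕ} (ε p : ℝ) (ω : Sym2 (Fin n) → Bool) (m s : ℕ) :
    (TPairs ε p ω (m + 1) s).card
      ≤ (TPairs ε p ω m (s + 1)).card + 3 * m * Kfl n ε p * (TPairs ε p ω m s).card := by
  classical
  set F := Finset (Fin n)
  let Fr : (Fin (m + 1) → F) × (Fin s → F) → Prop := fun q =>
    ∀ j : Fin m, Disjoint (edgesOf (q.1 j.castSucc)) (edgesOf (q.1 (Fin.last m)))
  have hsplit : (TPairs ε p ω (m + 1) s).card
      ≤ ((TPairs ε p ω (m + 1) s).filter Fr).card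
        + ((TPairs ε p ω (m + 1) s).filter (fun q => ¬ Fr q)).card := by
    refine le_trans (Finset.card_le_card ?_) (Finset.card_union_le _ _)
    intro q hq
    rw [Finset.mem_union, Finset.mem_filter, Finset.mem_filter]
    by_cases h : Fr q
    · exact Or.inl ⟨hq, h⟩
    · exact Or.inr ⟨hq, h⟩
  have hmem : ∀ q ∈ TPairs ε p ω (m + 1) s,
      (∀ i, GoodTriP ε p ω (q.1 i)) ∧ (∀ l, GoodTriP ε p ω (q.2 l)) ∧
      (∀ l l', l ≠ l' → Disjoint (edgesOf (q.2 l)) (edgesOf (q.2 l'))) ∧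
      (∀ i l, Disjoint (edgesOf (q.1 i)) (edgesOf (q.2 l))) := by
    intro q hq
    rw [TPairs, Finset.mem_filter] at hq
    exact hq.2
  -- fresh part
  have hfresh : ((TPairs ε p ω (m + 1) s).filter Fr).card ≤ (TPairs ε p ω m (s + 1)).card := by
    apply Finset.card_le_card_of_injOn
      (fun q => (q.1 ∘ Fin.castSucc, Fin.cons (q.1 (Fin.last m)) q.2))
    · intro q hq
      rw [Finset.mem_coe, Finset.mem_filter] at hq
      obtain ⟨hq, hFr⟩ := hq
      obtain ⟨h1, h2, h3, h4⟩ := hmem q hq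
      rw [Finset.mem_coe, TPairs, Finset.mem_filter]
      refine ⟨Finset.mem_univ _, fun i => h1 _, fun l => ?_, fun l l' hll' => ?_, fun i l => ?_⟩
      · refine Fin.cases ?_ ?_ l
        · simpa using h1 (Fin.last m)
        · intro l'; simpa using h2 l'
      · obtain rfl | ⟨a, rfl⟩ := Fin.eq_zero_or_eq_succ l <;>
          obtain rfl | ⟨b, rfl⟩ := Fin.eq_zero_or_eq_succ l'
        · exact absurd rfl hll'
        · simp only [Fin.cons_zero, Fin.cons_succ]
          exact h4 (Fin.last m) b
        · simp only [Fin.cons_zero, Fin.cons_succ]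
          exact (h4 (Fin.last m) a).symm
        · simp only [Fin.cons_succ]
          exact h3 a b (fun hab => hll' (by rw [hab]))
      · refine Fin.cases ?_ ?_ l
        · simpa using hFr i
        · intro l'; simpa using h4 i.castSucc l'
    · intro q hq q' hq' h
      simp only [Prod.mk.injEq] at h
      obtain ⟨hfa, hfb⟩ := h
      have ht : q.1 (Fin.last m) = q'.1 (Fin.last m) := by
        have := congrFun hfb 0
        simpa using this
      have hg : q.2 = q'.2 := by
        funext l
        have := congrFun hfb l.succ
        simpa using this
      have hf : q.1 = q'.1 := by
        funext i
        refine Fin.lastCases ht (fun j => ?_) i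
        exact congrFun hfa j
      exact Prod.ext hf hg
  -- non-fresh part
  have hnonfresh : ((TPairs ε p ω (m + 1) s).filter (fun q => ¬ Fr q)).card
      ≤ 3 * m * Kfl n ε p * (TPairs ε p ω m s).card := by
    set NF : (Fin m → F) → Finset F := fun f' =>
      Finset.univ.filter (fun t : F => GoodTriP ε p ω t ∧
        ¬ ∀ j, Disjoint (edgesOf (f' j)) (edgesOf t)) with hNF
    have hcard : ((TPairs ε p ω (m + 1) s).filter (fun q => ¬ Fr q)).card
        ≤ ((TPairs ε p ω m s).biUnion
            (fun q' => ({q'} : Finset ((Fin m → F) × (Fin s → F))) ×ˢ NF q'.1)).card := by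
      apply Finset.card_le_card_of_injOn
        (fun q => ((q.1 ∘ Fin.castSucc, q.2), q.1 (Fin.last m)))
      · intro q hq
        rw [Finset.mem_coe, Finset.mem_filter] at hq
        obtain ⟨hq, hFr⟩ := hq
        obtain ⟨h1, h2, h3, h4⟩ := hmem q hq
        rw [Finset.mem_coe, Finset.mem_biUnion]
        refine ⟨(q.1 ∘ Fin.castSucc, q.2), ?_, ?_⟩
        · rw [TPairs, Finset.mem_filter]
          exact ⟨Finset.mem_univ _, fun i => h1 _, h2, h3, fun i l => h4 i.castSucc l⟩
        · rw [Finset.mem_product]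
          refine ⟨Finset.mem_singleton_self _, ?_⟩
          rw [hNF, Finset.mem_filter]
          exact ⟨Finset.mem_univ _, h1 (Fin.last m), fun hall => hFr hall⟩
      · intro q hq q' hq' h
        simp only [Prod.mk.injEq] at h
        obtain ⟨⟨hfa, hgb⟩, ht⟩ := h
        have hf : q.1 = q'.1 := by
          funext i
          refine Fin.lastCases ht (fun j => ?_) i
          exact congrFun hfa j
        exact Prod.ext hf hgb
    refine hcard.trans ?_
    refine (Finset.card_biUnion_le).trans ?_
    have : ∀ q' ∈ TPairs ε p ω m s,
        (({q'} : Finset ((Fin m → F) × (Fin s → F))) ×ˢ NF q'.1).card ≤ 3 * m * Kfl n ε p := by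
      intro q' hq'
      rw [Finset.card_product, Finset.card_singleton, one_mul, hNF]
      rw [TPairs, Finset.mem_filter] at hq'
      exact card_nonfresh_le ε p ω q'.1 (fun j => hq'.2.1 j)
    calc ∑ q' ∈ TPairs ε p ω m s, (({q'} : Finset _) ×ˢ NF q'.1).card
        ≤ ∑ _q' ∈ TPairs ε p ω m s, 3 * m * Kfl n ε p := Finset.sum_le_sum this
      _ = (TPairs ε p ω m s).card * (3 * m * Kfl n ε p) := by simp [Finset.sum_const, mul_comm]
      _ = 3 * m * Kfl n ε p * (TPairs ε p ω m s).card := mul_comm _ _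
  exact hsplit.trans (Nat.add_le_add hfresh hnonfresh)


lemma pascal_sum_aux (X : ℕ → ℕ) (m : ℕ) :
    ∑ r ∈ Finset.range (m + 2), (m + 1).choose r * X r
      = ∑ r ∈ Finset.range (m + 1), m.choose r * X (r + 1)
        + ∑ r ∈ Finset.range (m + 1), m.choose r * X r := by
  rw [Finset.sum_range_succ' (fun r => (m + 1).choose r * X r)]
  simp only [Nat.choose_succ_succ, Nat.choose_zero_right, one_mul, add_mul,
    Nat.succ_eq_add_one]
  rw [Finset.sum_add_distrib]
  have h1 : ∑ r ∈ Finset.range (m + 1), m.choose (r + 1) * X (r + 1) + X 0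
      = ∑ r ∈ Finset.range (m + 1), m.choose r * X r := by
    rw [Finset.sum_range_succ (fun r => m.choose (r + 1) * X (r + 1))]
    rw [Nat.choose_succ_self, zero_mul, add_zero]
    rw [Finset.sum_range_succ' (fun r => m.choose r * X r)]
    simp
  omega

lemma TPairs_card_le {n : ℕ} (ε p : ℝ) (ω : Sym2 (Fin n) → Bool) (Mx : ℕ) :
    ∀ m, m ≤ Mx → ∀ s, (TPairs ε p ω m s).card
      ≤ ∑ r ∈ Finset.range (m + 1),
          m.choose r * Nseq (r + s) ω * (3 * Mx * Kfl n ε p) ^ (m - r) := by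
  intro m
  induction m with
  | zero =>
    intro _ s
    simpa using TPairs_zero_card_le ε p ω s
  | succ m ih =>
    intro hm s
    have hstep := TPairs_step ε p ω m s
    have ih1 := ih (le_of_lt (Nat.lt_of_succ_le hm)) (s + 1)
    have ih2 := ih (le_of_lt (Nat.lt_of_succ_le hm)) s
    have hB : 3 * m * Kfl n ε p ≤ 3 * Mx * Kfl n ε p := by
      have : m ≤ Mx := le_of_lt (Nat.lt_of_succ_le hm)
      exact Nat.mul_le_mul_right _ (Nat.mul_le_mul_left _ this)
    have key : (TPairs ε p ω (m + 1) s).card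
        ≤ ∑ r ∈ Finset.range (m + 1), m.choose r * Nseq (r + (s + 1)) ω
              * (3 * Mx * Kfl n ε p) ^ (m - r)
          + (3 * Mx * Kfl n ε p)
            * ∑ r ∈ Finset.range (m + 1), m.choose r * Nseq (r + s) ω
              * (3 * Mx * Kfl n ε p) ^ (m - r) :=
      hstep.trans (Nat.add_le_add ih1
        ((Nat.mul_le_mul hB ih2).trans (le_of_eq rfl)))
    refine key.trans (le_of_eq ?_)
    set B := 3 * Mx * Kfl n ε p with hBdef
    have hX := pascal_sum_aux (fun r => Nseq (r + s) ω * B ^ (m + 1 - r)) m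
    have hR : ∑ r ∈ Finset.range (m + 1 + 1), (m + 1).choose r * Nseq (r + s) ω * B ^ (m + 1 - r)
        = ∑ r ∈ Finset.range (m + 2), (m + 1).choose r * (Nseq (r + s) ω * B ^ (m + 1 - r)) :=
      Finset.sum_congr (by norm_num) fun r _ => mul_assoc _ _ _
    have hA : ∑ r ∈ Finset.range (m + 1), m.choose r * Nseq (r + (s + 1)) ω * B ^ (m - r)
        = ∑ r ∈ Finset.range (m + 1), m.choose r * (Nseq (r + 1 + s) ω * B ^ (m + 1 - (r + 1))) := by
      refine Finset.sum_congr rfl fun r hr => ?_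
      have h1 : r + (s + 1) = r + 1 + s := by omega
      have h2 : m - r = m + 1 - (r + 1) := by omega
      rw [h1, h2, mul_assoc]
    have hBB : B * ∑ r ∈ Finset.range (m + 1), m.choose r * Nseq (r + s) ω * B ^ (m - r)
        = ∑ r ∈ Finset.range (m + 1), m.choose r * (Nseq (r + s) ω * B ^ (m + 1 - r)) := by
      rw [Finset.mul_sum]
      refine Finset.sum_congr rfl fun r hr => ?_
      rw [Finset.mem_range] at hr
      have h2 : m + 1 - r = (m - r) + 1 := by omega
      rw [h2, pow_succ]
      ring
    rw [hR, hX, hA, hBB]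

lemma pow_le_TPairs_card {n : ℕ} (ε p : ℝ) (ω : Sym2 (Fin n) → Bool) (Mx : ℕ) :
    (triGoodEdges ε p ω) ^ Mx ≤ (TPairs ε p ω Mx 0).card := by
  rw [triGoodEdges_eq]
  have hpi : ((Finset.univ.filter (fun t => GoodTriP ε p ω t)).card) ^ Mx
      = (Fintype.piFinset (fun _ : Fin Mx =>
          Finset.univ.filter (fun t => GoodTriP ε p ω t))).card := by
    rw [Fintype.card_piFinset]
    simp
  rw [hpi]
  apply Finset.card_le_card_of_injOn (fun f => (f, fun l : Fin 0 => l.elim0))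
  · intro f hf
    rw [Finset.mem_coe, Fintype.mem_piFinset] at hf
    rw [Finset.mem_coe, TPairs, Finset.mem_filter]
    refine ⟨Finset.mem_univ _, fun i => ?_, fun l => l.elim0, fun l => l.elim0, fun i l => l.elim0⟩
    have := hf i
    rw [Finset.mem_filter] at this
    exact this.2
  · intro f _ f' _ h
    exact congrArg Prod.fst h

lemma lintegral_Nseq_le {n : ℕ} (p : ℝ≥0) (hp : p ≤ 1) (r : ℕ) :
    ∫⁻ ω, (Nseq r ω : ℝ≥0∞) ∂(erMeasure n p hp)
      ≤ ((n.choose 3 : ℝ≥0∞) * (p : ℝ≥0∞) ^ 3) ^ r := by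
  have hcount : ∀ ω : Sym2 (Fin n) → Bool, (Nseq r ω : ℝ≥0∞)
      = ∑ g ∈ DisjSet n r, (if ∀ i, IsTriangle ω (g i) then (1 : ℝ≥0∞) else 0) := by
    intro ω
    rw [Nseq, Finset.card_filter, Nat.cast_sum]
    refine Finset.sum_congr rfl fun g _ => ?_
    split <;> simp
  calc ∫⁻ ω, (Nseq r ω : ℝ≥0∞) ∂(erMeasure n p hp)
      = ∑ g ∈ DisjSet n r, ∫⁻ ω,
          (if ∀ i, IsTriangle ω (g i) then (1 : ℝ≥0∞) else 0) ∂(erMeasure n p hp) := by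
        rw [← lintegral_finset_sum]
        · exact lintegral_congr fun ω => hcount ω
        · intro g _
          exact measurable_of_countable _
    _ = ∑ g ∈ DisjSet n r, erMeasure n p hp {ω | ∀ i, IsTriangle ω (g i)} := by
        refine Finset.sum_congr rfl fun g _ => ?_
        have : (fun ω : Sym2 (Fin n) → Bool =>
            (if ∀ i, IsTriangle ω (g i) then (1 : ℝ≥0∞) else 0))
            = Set.indicator {ω | ∀ i, IsTriangle ω (g i)} (fun _ => 1) := by
          ext ω
          by_cases h : ∀ i, IsTriangle ω (g i) <;> simp [h, Set.indicator, Set.mem_setOf_eq]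
        rw [this]
        exact lintegral_indicator_one (μ := erMeasure n p hp) (er_meas_all _)
    _ ≤ ∑ _g ∈ DisjSet n r, ((p : ℝ≥0∞) ^ 3) ^ r := by
        refine Finset.sum_le_sum fun g hg => ?_
        rw [DisjSet, Finset.mem_filter] at hg
        obtain ⟨-, hcard, hdisj⟩ := hg
        have hset : {ω : Sym2 (Fin n) → Bool | ∀ i, IsTriangle ω (g i)}
            = {ω | ∀ e ∈ Finset.univ.biUnion (fun i => edgesOf (g i)), ω e = true} := by
          ext ω
          simp only [Set.mem_setOf_eq, Finset.mem_biUnion]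
          constructor
          · rintro h e ⟨i, -, hei⟩
            exact (isTriangle_iff_edges (hcard i)).mp (h i) e hei
          · intro h i
            exact (isTriangle_iff_edges (hcard i)).mpr
              (fun e he => h e ⟨i, Finset.mem_univ _, he⟩)
        rw [hset, er_cylinder]
        have hc : (Finset.univ.biUnion (fun i => edgesOf (g i))).card = 3 * r := by
          rw [Finset.card_biUnion (fun i _ j _ hij => hdisj i j hij)]
          have : ∀ i : Fin r, (edgesOf (g i)).card = 3 := fun i => edgesOf_card_three (hcard i)
          simp [this, Finset.sum_const, mul_comm]
        rw [hc, pow_mul]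
    _ ≤ ((n.choose 3 : ℝ≥0∞) * (p : ℝ≥0∞) ^ 3) ^ r := by
        rw [Finset.sum_const, nsmul_eq_mul, mul_pow]
        apply mul_le_mul_left
        have hD : (DisjSet n r).card ≤ (n.choose 3) ^ r := by
          have hsub : DisjSet n r ⊆ Fintype.piFinset
              (fun _ : Fin r => Finset.powersetCard 3 (Finset.univ : Finset (Fin n))) := by
            intro g hg
            rw [DisjSet, Finset.mem_filter] at hg
            rw [Fintype.mem_piFinset]
            intro i
            rw [Finset.mem_powersetCard_univ]
            exact hg.2.1 i
          refine (Finset.card_le_card hsub).trans ?_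
          rw [Fintype.card_piFinset]
          simp
        calc ((DisjSet n r).card : ℝ≥0∞) ≤ ((n.choose 3) ^ r : ℕ) := by exact_mod_cast hD
          _ = ((n.choose 3 : ℝ≥0∞)) ^ r := by push_cast; ring

lemma moment_bound {n : ℕ} (ε : ℝ) (p : ℝ≥0) (hp : p ≤ 1) (Mx : ℕ) :
    ∫⁻ ω, ((triGoodEdges ε (p : ℝ) ω : ℝ≥0∞)) ^ Mx ∂(erMeasure n p hp)
      ≤ ((n.choose 3 : ℝ≥0∞) * (p : ℝ≥0∞) ^ 3
          + ((3 * Mx * Kfl n ε (p : ℝ) : ℕ) : ℝ≥0∞)) ^ Mx := by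
  set B : ℕ := 3 * Mx * Kfl n ε (p : ℝ) with hB
  have h1 : ∀ ω : Sym2 (Fin n) → Bool, ((triGoodEdges ε (p : ℝ) ω : ℝ≥0∞)) ^ Mx
      ≤ ∑ r ∈ Finset.range (Mx + 1),
          ((Mx.choose r * (B : ℕ) ^ (Mx - r) : ℕ) : ℝ≥0∞) * ((Nseq r ω : ℕ) : ℝ≥0∞) := by
    intro ω
    have hnat : (triGoodEdges ε (p : ℝ) ω) ^ Mx
        ≤ ∑ r ∈ Finset.range (Mx + 1), Mx.choose r * B ^ (Mx - r) * Nseq r ω := by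
      refine (pow_le_TPairs_card ε (p : ℝ) ω Mx).trans ?_
      refine (TPairs_card_le ε (p : ℝ) ω Mx Mx le_rfl 0).trans (le_of_eq ?_)
      refine Finset.sum_congr rfl fun r _ => ?_
      rw [Nat.add_zero]
      ring
    calc ((triGoodEdges ε (p : ℝ) ω : ℝ≥0∞)) ^ Mx
        = (((triGoodEdges ε (p : ℝ) ω) ^ Mx : ℕ) : ℝ≥0∞) := by push_cast; ring
      _ ≤ ((∑ r ∈ Finset.range (Mx + 1), Mx.choose r * B ^ (Mx - r) * Nseq r ω : ℕ) : ℝ≥0∞) := by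
          exact_mod_cast hnat
      _ = ∑ r ∈ Finset.range (Mx + 1),
            ((Mx.choose r * (B : ℕ) ^ (Mx - r) : ℕ) : ℝ≥0∞) * ((Nseq r ω : ℕ) : ℝ≥0∞) := by
          push_cast; ring
  calc ∫⁻ ω, ((triGoodEdges ε (p : ℝ) ω : ℝ≥0∞)) ^ Mx ∂(erMeasure n p hp)
      ≤ ∫⁻ ω, ∑ r ∈ Finset.range (Mx + 1),
          ((Mx.choose r * (B : ℕ) ^ (Mx - r) : ℕ) : ℝ≥0∞) * ((Nseq r ω : ℕ) : ℝ≥0∞)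
            ∂(erMeasure n p hp) := lintegral_mono h1
    _ = ∑ r ∈ Finset.range (Mx + 1), ((Mx.choose r * (B : ℕ) ^ (Mx - r) : ℕ) : ℝ≥0∞)
          * ∫⁻ ω, ((Nseq r ω : ℕ) : ℝ≥0∞) ∂(erMeasure n p hp) := by
        rw [lintegral_finset_sum]
        · refine Finset.sum_congr rfl fun r _ => ?_
          rw [lintegral_const_mul]
          exact measurable_of_countable _
        · intro r _
          exact measurable_of_countable _
    _ ≤ ∑ r ∈ Finset.range (Mx + 1), ((Mx.choose r * (B : ℕ) ^ (Mx - r) : ℕ) : ℝ≥0∞)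
          * ((n.choose 3 : ℝ≥0∞) * (p : ℝ≥0∞) ^ 3) ^ r := by
        refine Finset.sum_le_sum fun r _ => ?_
        exact mul_le_mul_right (lintegral_Nseq_le p hp r) _
    _ = ((n.choose 3 : ℝ≥0∞) * (p : ℝ≥0∞) ^ 3 + ((B : ℕ) : ℝ≥0∞)) ^ Mx := by
        rw [add_pow]
        refine Finset.sum_congr rfl fun r _ => ?_
        push_cast
        ring

lemma triGoodEdges_le_choose {n : ℕ} (ε p : ℝ) (ω : Sym2 (Fin n) → Bool) :
    triGoodEdges ε p ω ≤ n.choose 3 := by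
  rw [triGoodEdges_eq]
  calc (Finset.univ.filter (fun t => GoodTriP ε p ω t)).card
      ≤ (Finset.powersetCard 3 (Finset.univ : Finset (Fin n))).card := by
        apply Finset.card_le_card
        intro t ht
        rw [Finset.mem_filter] at ht
        rw [Finset.mem_powersetCard_univ]
        exact ht.2.1.1
    _ = n.choose 3 := by rw [Finset.card_powersetCard]; simp

lemma choose_three_le {n : ℕ} : ((n.choose 3 : ℝ)) ≤ (n : ℝ) ^ 3 / 6 := by
  have h : n.choose 3 * 6 ≤ n ^ 3 := by
    calc n.choose 3 * 6 = n.choose 3 * Nat.factorial 3 := by norm_num [Nat.factorial]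
      _ = n.descFactorial 3 := by rw [Nat.descFactorial_eq_factorial_mul_choose]; ring
      _ ≤ n ^ 3 := Nat.descFactorial_le_pow n 3
  have h' : ((n.choose 3 * 6 : ℕ) : ℝ) ≤ ((n ^ 3 : ℕ) : ℝ) := by exact_mod_cast h
  push_cast at h'
  linarith

end Aux

set_option maxHeartbeats 2000000 in
/-- **Proposition 4.1**: upper tail for the number of triangles with all good edges. -/
theorem triGoodEdges_upper_tail (ε : ℝ) (hε : 0 < ε) :
    ∃ C : ℝ, 0 < C ∧ ∃ M : ℝ, ∀ (n : ℕ) (p : ℝ≥0) (hp : p ≤ 1),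
      0 < (p : ℝ) → (p : ℝ) < 1 → M ≤ (n : ℝ) * (p : ℝ) →
      erMeasure n p hp
          {ω | (∫ ω', (triangleCount ω' : ℝ) ∂(erMeasure n p hp))
                + ε * (n : ℝ) ^ 3 * (p : ℝ) ^ 3 ≤ (triGoodEdges ε (p : ℝ) ω : ℝ)}
        ≤ ENNReal.ofReal
            (Real.exp (-C * (n : ℝ) ^ 2 * (p : ℝ) ^ 2 * Real.log (1 / (p : ℝ)))) := by
  have hden : (0:ℝ) < 1/6 + ε := by linarith
  set δ : ℝ := (3 * ε / 4) / (1 / 6 + ε) with hδdef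
  have hδpos : 0 < δ := div_pos (by linarith) hden
  have hδlt : δ < 1 := (div_lt_one hden).mpr (by linarith)
  set L₀ : ℝ := Real.log (1 + 3 * ε) / 3 with hL₀def
  have hL₀pos : 0 < L₀ := div_pos (Real.log_pos (by linarith)) (by norm_num)
  refine ⟨δ / 24, by positivity, max 1 (Real.sqrt (24 / L₀)), ?_⟩
  intro n p hp hp0 hp1 hM
  set pr : ℝ := (p : ℝ) with hprdef
  set nr : ℝ := (n : ℝ) with hnrdef
  have hnp1 : (1:ℝ) ≤ nr * pr := (le_max_left _ _).trans hM
  have hnppos : (0:ℝ) < nr * pr := lt_of_lt_of_le one_pos hnp1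
  have hnr0 : (0:ℝ) ≤ nr := Nat.cast_nonneg n
  have hn1 : (1:ℝ) ≤ nr := by nlinarith
  have hLpos : 0 < Real.log (1 / pr) := Real.log_pos (by rw [lt_div_iff₀ hp0]; linarith)
  set L : ℝ := Real.log (1 / pr) with hLdef
  rw [er_expected_triangles p hp]
  set D : ℝ := (n.choose 3 : ℝ) * pr ^ 3 with hDdef
  set a : ℝ := D + ε * nr ^ 3 * pr ^ 3 with hadef
  have hT0 : (0:ℝ) < nr ^ 3 * pr ^ 3 := by positivity
  have hD0 : (0:ℝ) ≤ D := by positivity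
  have hapos : 0 < a := by nlinarith
  have hDle : D ≤ nr ^ 3 * pr ^ 3 / 6 := by
    have h1 : (0:ℝ) ≤ pr ^ 3 := by positivity
    have h2 := choose_three_le (n := n)
    rw [hDdef]
    have h4 := mul_le_mul_of_nonneg_right h2 h1
    calc (n.choose 3 : ℝ) * pr ^ 3 ≤ nr ^ 3 / 6 * pr ^ 3 := h4
      _ = nr ^ 3 * pr ^ 3 / 6 := by ring
  by_cases hcase : 1 ≤ (1 + 3 * ε) * pr ^ 3
  -- Case A: p very close to 1, the event is empty
  · have hlt : (n.choose 3 : ℝ) < a := by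
      have h1 : 1 - pr ^ 3 ≤ 3 * ε * pr ^ 3 := by nlinarith
      have hpr3' : pr ^ 3 ≤ 1 := pow_le_one₀ hp0.le hp1.le
      have hpr3 : (0:ℝ) ≤ 1 - pr ^ 3 := by linarith
      have hch := choose_three_le (n := n)
      have h2 : (n.choose 3 : ℝ) * (1 - pr ^ 3) ≤ (nr ^ 3 / 6) * (3 * ε * pr ^ 3) :=
        mul_le_mul hch h1 hpr3 (by positivity)
      have h3 : (0:ℝ) < ε * nr ^ 3 * pr ^ 3 := by positivity
      rw [hadef, hDdef]
      nlinarith [h2, h3]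
    have hempty : {ω : Sym2 (Fin n) → Bool |
        (n.choose 3 : ℝ) * pr ^ 3 + ε * nr ^ 3 * pr ^ 3 ≤ (triGoodEdges ε pr ω : ℝ)} = ∅ := by
      rw [Set.eq_empty_iff_forall_notMem]
      intro ω hω
      rw [Set.mem_setOf_eq] at hω
      have hle : (triGoodEdges ε pr ω : ℝ) ≤ (n.choose 3 : ℝ) := by
        exact_mod_cast triGoodEdges_le_choose ε pr ω
      rw [hadef, hDdef] at hlt
      linarith
    rw [hempty, measure_empty]
    exact zero_le
  -- Case B: the moment argument
  · push_neg at hcase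
    have hpr3pos : (0:ℝ) < pr ^ 3 := by positivity
    have hL0le : L₀ ≤ L := by
      have h1 : (1:ℝ) + 3 * ε < (1 / pr) ^ 3 := by
        rw [div_pow, one_pow, lt_div_iff₀ hpr3pos]
        linarith [hcase]
      have h2 : Real.log (1 + 3 * ε) ≤ Real.log ((1 / pr) ^ 3) :=
        Real.log_le_log (by linarith) h1.le
      rw [Real.log_pow] at h2
      rw [hL₀def, hLdef]
      push_cast at h2
      linarith
    have hQ24 : 24 ≤ nr ^ 2 * pr ^ 2 * L := by
      have hsq : Real.sqrt (24 / L₀) ≤ nr * pr := (le_max_right _ _).trans hM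
      have h1 : 24 / L₀ ≤ (nr * pr) ^ 2 := by
        rw [← Real.sq_sqrt (by positivity : (0:ℝ) ≤ 24 / L₀)]
        exact pow_le_pow_left₀ (Real.sqrt_nonneg _) hsq 2
      have h2 : 24 / L₀ * L₀ ≤ (nr * pr) ^ 2 * L := by
        have := mul_le_mul h1 hL0le hL₀pos.le (by positivity)
        linarith
      rw [div_mul_cancel₀ _ hL₀pos.ne'] at h2
      calc (24:ℝ) ≤ (nr * pr) ^ 2 * L := h2
        _ = nr ^ 2 * pr ^ 2 * L := by ring
    set Q : ℝ := nr ^ 2 * pr ^ 2 * L with hQdef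
    have hQpos : 0 < Q := by positivity
    set Mx : ℕ := ⌈Q / 24⌉₊ with hMxdef
    have hMxge : Q / 24 ≤ (Mx : ℝ) := Nat.le_ceil _
    have hMxle : (Mx : ℝ) ≤ Q / 24 + 1 := (Nat.ceil_lt_add_one (by positivity)).le
    set K : ℕ := Kfl n ε pr with hKdef
    have hKle : (K : ℝ) ≤ ε * (1 / L) * nr * pr := by
      rw [hKdef, Kfl]
      exact Nat.floor_le (by positivity)
    set B : ℕ := 3 * Mx * K with hBdef
    -- bound on B
    have hBle : (B : ℝ) ≤ ε * (nr ^ 3 * pr ^ 3) / 4 := by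
      have hcast : (B : ℝ) = 3 * (Mx : ℝ) * (K : ℝ) := by rw [hBdef]; push_cast; ring
      have h4 : 3 * (Mx : ℝ) * (K : ℝ) ≤ 3 * (Q / 24 + 1) * (ε * (1 / L) * nr * pr) := by
        apply mul_le_mul
        · linarith
        · exact hKle
        · positivity
        · positivity
      have h6' : 24 * (nr * pr) ≤ nr ^ 3 * pr ^ 3 * L := by nlinarith [hQ24, hnppos]
      have hexp : 3 * (Q / 24 + 1) * (ε * (1 / L) * nr * pr)
          = ε * (nr ^ 3 * pr ^ 3) / 8 + 3 * (ε * nr * pr) / L := by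
        rw [hQdef]; field_simp; ring
      have h6 : 3 * (ε * nr * pr) / L ≤ ε * (nr ^ 3 * pr ^ 3) / 8 := by
        rw [div_le_div_iff₀ hLpos (by norm_num : (0:ℝ) < 8)]
        nlinarith [mul_le_mul_of_nonneg_left h6' hε.le]
      rw [hcast]
      calc 3 * (Mx : ℝ) * (K : ℝ) ≤ 3 * (Q / 24 + 1) * (ε * (1 / L) * nr * pr) := h4
        _ = ε * (nr ^ 3 * pr ^ 3) / 8 + 3 * (ε * nr * pr) / L := hexp
        _ ≤ ε * (nr ^ 3 * pr ^ 3) / 8 + ε * (nr ^ 3 * pr ^ 3) / 8 := by linarith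
        _ = ε * (nr ^ 3 * pr ^ 3) / 4 := by ring
    -- main real inequality
    have hq : (1 - δ) * (1 / 6 + ε) = 1 / 6 + ε / 4 := by
      rw [hδdef]; field_simp; ring
    have hDa : D + (B : ℝ) ≤ (1 - δ) * a := by
      have hprod : 0 ≤ δ * (nr ^ 3 * pr ^ 3 / 6 - D) :=
        mul_nonneg hδpos.le (by linarith)
      have hqT : (nr ^ 3 * pr ^ 3) * ((1 - δ) * (1 / 6 + ε))
          = (nr ^ 3 * pr ^ 3) * (1 / 6 + ε / 4) := by rw [hq]
      rw [hadef]
      nlinarith [hqT, hprod, hBle, hT0.le, hDle]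
    have hDB0 : (0:ℝ) ≤ D + (B : ℝ) := by positivity
    have h1δ0 : (0:ℝ) ≤ 1 - δ := by linarith
    -- real exponential bound
    have hreal : (D + (B : ℝ)) ^ Mx
        ≤ a ^ Mx * Real.exp (-(δ / 24) * nr ^ 2 * pr ^ 2 * L) := by
      calc (D + (B : ℝ)) ^ Mx ≤ ((1 - δ) * a) ^ Mx := pow_le_pow_left₀ hDB0 hDa Mx
        _ = (1 - δ) ^ Mx * a ^ Mx := mul_pow _ _ _
        _ ≤ Real.exp (-δ) ^ Mx * a ^ Mx := by
            apply mul_le_mul_of_nonneg_right _ (by positivity)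
            apply pow_le_pow_left₀ h1δ0
            linarith [Real.add_one_le_exp (-δ)]
        _ = Real.exp (-δ * Mx) * a ^ Mx := by
            rw [← Real.exp_nat_mul]
            ring_nf
        _ ≤ Real.exp (-(δ / 24) * nr ^ 2 * pr ^ 2 * L) * a ^ Mx := by
            apply mul_le_mul_of_nonneg_right _ (by positivity)
            apply Real.exp_le_exp.mpr
            have hδM : δ / 24 * Q ≤ δ * Mx := by
              have := mul_le_mul_of_nonneg_left hMxge hδpos.le
              calc δ / 24 * Q = δ * (Q / 24) := by ring
                _ ≤ δ * Mx := this
            rw [hQdef] at hδM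
            nlinarith [hδM]
        _ = a ^ Mx * Real.exp (-(δ / 24) * nr ^ 2 * pr ^ 2 * L) := mul_comm _ _
    -- Markov / moment chain in ℝ≥0∞
    set S : Set (Sym2 (Fin n) → Bool) := {ω |
        (n.choose 3 : ℝ) * pr ^ 3 + ε * nr ^ 3 * pr ^ 3 ≤ (triGoodEdges ε pr ω : ℝ)} with hSdef
    have hmom := moment_bound (n := n) ε p hp Mx
    have hmarkov : (ENNReal.ofReal a) ^ Mx * erMeasure n p hp S
        ≤ ∫⁻ ω, ((triGoodEdges ε pr ω : ℝ≥0∞)) ^ Mx ∂(erMeasure n p hp) := by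
      have hsub : S ⊆ {ω | (ENNReal.ofReal a) ^ Mx
          ≤ ((triGoodEdges ε pr ω : ℝ≥0∞)) ^ Mx} := by
        intro ω hω
        rw [hSdef, Set.mem_setOf_eq] at hω
        rw [Set.mem_setOf_eq]
        apply pow_le_pow_left'
        calc ENNReal.ofReal a ≤ ENNReal.ofReal ((triGoodEdges ε pr ω : ℝ)) := by
              apply ENNReal.ofReal_le_ofReal
              rw [hadef, hDdef]
              exact hω
          _ = ((triGoodEdges ε pr ω : ℕ) : ℝ≥0∞) := ENNReal.ofReal_natCast _
      calc (ENNReal.ofReal a) ^ Mx * erMeasure n p hp S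
          ≤ (ENNReal.ofReal a) ^ Mx * erMeasure n p hp {ω | (ENNReal.ofReal a) ^ Mx
              ≤ ((triGoodEdges ε pr ω : ℝ≥0∞)) ^ Mx} :=
            mul_le_mul_right (measure_mono hsub) _
        _ ≤ ∫⁻ ω, ((triGoodEdges ε pr ω : ℝ≥0∞)) ^ Mx ∂(erMeasure n p hp) :=
            mul_meas_ge_le_lintegral₀ ((measurable_of_countable _).aemeasurable) _
    have hright : ((n.choose 3 : ℝ≥0∞) * (p : ℝ≥0∞) ^ 3
        + ((3 * Mx * Kfl n ε (p : ℝ) : ℕ) : ℝ≥0∞)) = ENNReal.ofReal (D + (B : ℝ)) := by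
      rw [ENNReal.ofReal_add hD0 (Nat.cast_nonneg B)]
      congr 1
      · rw [hDdef, ENNReal.ofReal_mul (Nat.cast_nonneg _), ENNReal.ofReal_natCast,
          ENNReal.ofReal_pow (le_of_lt hp0)]
        rw [hprdef, ENNReal.ofReal_coe_nnreal]
      · rw [ENNReal.ofReal_natCast]
    have hchain : (ENNReal.ofReal a) ^ Mx * erMeasure n p hp S
        ≤ (ENNReal.ofReal a) ^ Mx
          * ENNReal.ofReal (Real.exp (-(δ / 24) * nr ^ 2 * pr ^ 2 * L)) := by
      calc (ENNReal.ofReal a) ^ Mx * erMeasure n p hp S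
          ≤ ∫⁻ ω, ((triGoodEdges ε pr ω : ℝ≥0∞)) ^ Mx ∂(erMeasure n p hp) := hmarkov
        _ ≤ ((n.choose 3 : ℝ≥0∞) * (p : ℝ≥0∞) ^ 3
            + ((3 * Mx * Kfl n ε (p : ℝ) : ℕ) : ℝ≥0∞)) ^ Mx := hmom
        _ = (ENNReal.ofReal (D + (B : ℝ))) ^ Mx := by rw [hright]
        _ = ENNReal.ofReal ((D + (B : ℝ)) ^ Mx) := (ENNReal.ofReal_pow hDB0 _).symm
        _ ≤ ENNReal.ofReal (a ^ Mx * Real.exp (-(δ / 24) * nr ^ 2 * pr ^ 2 * L)) :=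
            ENNReal.ofReal_le_ofReal hreal
        _ = (ENNReal.ofReal a) ^ Mx
            * ENNReal.ofReal (Real.exp (-(δ / 24) * nr ^ 2 * pr ^ 2 * L)) := by
            rw [ENNReal.ofReal_mul (by positivity), ENNReal.ofReal_pow hapos.le]
    have hne0 : (ENNReal.ofReal a) ^ Mx ≠ 0 := by
      apply pow_ne_zero
      simp only [ne_eq, ENNReal.ofReal_eq_zero, not_le]
      linarith
    have hnetop : (ENNReal.ofReal a) ^ Mx ≠ ⊤ := ENNReal.pow_ne_top ENNReal.ofReal_ne_top
    exact (ENNReal.mul_le_mul_iff_right hne0 hnetop).mp hchain
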